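/- Let A be an abelian category with enough projectives, X a resolving subcategory of A, and M an object of A. Suppose 0 → X_n → X_{n−1} → ⋯ → X_0 → M → 0 and 0 → Y_n → Y_{n−1} → ⋯ → Y_0 → M → 0 are exact sequences with X_i, Y_i ∈ X for 0 ≤ i ≤ n−1. Then X_n ∈ X if and only if Y_n ∈ X. -/

import Mathlib

open CategoryTheory CategoryTheory.Limits

attribute [local instance] Abelian.hasFiniteBiproducts

universe v₁ v₂ v₃ u₁ u₂ u₃

/-- A recollement of abelian categories. -/
structure Recollement (A : Type u₁) (B : Type u₂) (C : Type u₃)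
    [Category.{v₁} A] [Category.{v₂} B] [Category.{v₃} C]
    [Abelian A] [Abelian B] [Abelian C] where
  /-- the functor `i^*` -/
  iStar : B ⥤ A
  /-- the functor `i_*` -/
  iLower : A ⥤ B
  /-- the functor `i^!` -/
  iShriek : B ⥤ A
  /-- the functor `j_!` -/
  jLower : C ⥤ B
  /-- the functor `j^*` -/
  jStar : B ⥤ C
  /-- the functor `j_*` -/
  jUpper : C ⥤ B
  adj₁ : iStar ⊣ iLower
  adj₂ : iLower ⊣ iShriek
  adj₃ : jLower ⊣ jStar
  adj₄ : jStar ⊣ jUpper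
  iLower_preservesFiniteLimits : PreservesFiniteLimits iLower
  iLower_preservesFiniteColimits : PreservesFiniteColimits iLower
  jStar_preservesFiniteLimits : PreservesFiniteLimits jStar
  jStar_preservesFiniteColimits : PreservesFiniteColimits jStar
  iStar_preservesFiniteColimits : PreservesFiniteColimits iStar
  iShriek_preservesFiniteLimits : PreservesFiniteLimits iShriek
  jLower_preservesFiniteColimits : PreservesFiniteColimits jLower
  jUpper_preservesFiniteLimits : PreservesFiniteLimits jUpper
  iLower_full : iLower.Full
  iLower_faithful : iLower.Faithful
  jLower_full : jLower.Full
  jLower_faithful : jLower.Faithful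
  jUpper_full : jUpper.Full
  jUpper_faithful : jUpper.Faithful
  im_eq_ker : ∀ b : B, IsZero (jStar.obj b) ↔ ∃ a : A, Nonempty (iLower.obj a ≅ b)

variable {A : Type u₁} [Category.{v₁} A] [Abelian A]

/-- A resolving subcategory: contains the projectives, closed under extensions
and under kernels of epimorphisms (given by short exact sequences). -/
structure IsResolving (X : Set A) : Prop where
  projective_mem : ∀ P : A, Projective P → P ∈ X
  ext_closed : ∀ S : ShortComplex A, S.ShortExact → S.X₁ ∈ X → S.X₃ ∈ X → S.X₂ ∈ X
  ker_epi_closed : ∀ S : ShortComplex A, S.ShortExact → S.X₂ ∈ X → S.X₃ ∈ X → S.X₁ ∈ X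

/-- `ResLE X M n` : there is an exact sequence `0 → X_n → ⋯ → X_0 → M → 0`
with all `X_i ∈ X`. -/
inductive ResLE (X : Set A) : A → ℕ → Prop
  | zero {M X₀ : A} (e : X₀ ≅ M) (hX₀ : X₀ ∈ X) : ResLE X M 0
  | succ {M K X₀ : A} {n : ℕ} (f : K ⟶ X₀) (g : X₀ ⟶ M) (w : f ≫ g = 0)
      (hse : (ShortComplex.mk f g w).ShortExact) (hX₀ : X₀ ∈ X)
      (hK : ResLE X K n) : ResLE X M (n + 1)

/-- The `X`-resolution dimension of an object `M` (`⊤` if there is no finite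
`X`-resolution). -/
noncomputable def resDim (X : Set A) (M : A) : ℕ∞ :=
  sInf {n : ℕ∞ | ∃ m : ℕ, ResLE X M m ∧ n = (m : ℕ∞)}

/-- The `X`-resolution dimension of the whole category. -/
noncomputable def resDimCat (X : Set A) : ℕ∞ :=
  ⨆ M : A, resDim X M

/-- The closure of a class of objects under finite direct sums and direct summands. -/
def addClosure (D : Set A) : Set A :=
  {a | ∃ (n : ℕ) (f : Fin n → A), (∀ i, f i ∈ D) ∧
    ∃ (s : a ⟶ ⨁ f) (r : ⨁ f ⟶ a), s ≫ r = 𝟙 a}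

/-- `IsSyzygy X n M K` : there is an exact sequence
`0 → K → X_{n-1} → ⋯ → X_0 → M → 0` with all the middle terms `X_i` in `X`. -/
inductive IsSyzygy {A : Type u₁} [Category.{v₁} A] [Abelian A] (X : Set A) :
    ℕ → A → A → Prop
  | zero {M K : A} (e : K ≅ M) : IsSyzygy X 0 M K
  | succ {M K K₁ X₀ : A} {n : ℕ} (f : K₁ ⟶ X₀) (g : X₀ ⟶ M) (w : f ≫ g = 0)
      (hse : (ShortComplex.mk f g w).ShortExact) (hX₀ : X₀ ∈ X)
      (h : IsSyzygy X n K₁ K) : IsSyzygy X (n + 1) M K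


section SchanuelAux
set_option linter.unusedSectionVars false

open CategoryTheory.Abelian CategoryTheory.Abelian.Pseudoelement ZeroObject

namespace SchanuelAux

variable {C : Type u₂} [Category.{v₂} C] [Abelian C] {X : Set C}

attribute [local instance] Abelian.hasFiniteBiproducts

attribute [local instance] Pseudoelement.objectToSort Pseudoelement.homToFun

lemma shortExact_of_epi {Y M : C} (g : Y ⟶ M) [Epi g] :
    (ShortComplex.mk (kernel.ι g) g (kernel.condition g)).ShortExact :=
  ShortComplex.ShortExact.mk' (ShortComplex.exact_of_f_is_kernel _ (kernelIsKernel g))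
    inferInstance inferInstance

/-- a pseudoelement of a binary biproduct with vanishing second component
is determined by its first component -/
lemma pseudo_biprod_eq {W P : C} (z : Pseudoelement (W ⊞ P))
    (hz : pseudoApply (biprod.snd : W ⊞ P ⟶ P) z = 0) :
    pseudoApply (biprod.inl : W ⟶ W ⊞ P) (pseudoApply (biprod.fst : W ⊞ P ⟶ W) z) = z := by
  refine Quotient.inductionOn z (fun a ha => ?_) hz
  have h0 : a.hom ≫ biprod.snd = 0 := by
    rw [pseudoApply_mk'] at ha
    exact (Pseudoelement.pseudoZero_iff _).1 ha
  have hm : a.hom ≫ biprod.fst ≫ biprod.inl = a.hom := by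
    have := biprod.total (X := W) (Y := P)
    calc a.hom ≫ biprod.fst ≫ biprod.inl
        = a.hom ≫ (biprod.fst ≫ biprod.inl + biprod.snd ≫ biprod.inr) := by
          rw [Preadditive.comp_add, ← Category.assoc, ← Category.assoc, h0, zero_comp, add_zero]
      _ = a.hom := by rw [this]; exact Category.comp_id _
  rw [pseudoApply_mk', pseudoApply_mk']
  apply Quotient.sound
  exact ⟨a.left, 𝟙 _, 𝟙 _, inferInstance, inferInstance, by simpa using hm⟩

lemma pseudo_id_apply {P : C} (y : Pseudoelement P) : pseudoApply (𝟙 P) y = y := by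
  refine Quotient.inductionOn y (fun a => ?_)
  rw [pseudoApply_mk']
  apply Quotient.sound
  exact ⟨a.left, 𝟙 _, 𝟙 _, inferInstance, inferInstance, by simp⟩

variable [EnoughProjectives C]

/-- one step of the horseshoe construction -/
lemma horseshoe_step
    {Aa B Cc W A₁ : C} {i : Aa ⟶ B} {p : B ⟶ Cc} {wip : i ≫ p = 0}
    (hS : (ShortComplex.mk i p wip).ShortExact)
    {j : A₁ ⟶ W} {f : W ⟶ Aa} {wjf : j ≫ f = 0}
    (hT : (ShortComplex.mk j f wjf).ShortExact) :
    ∃ (A₁' : C) (j' : A₁' ⟶ (W ⊞ Projective.over Cc : C))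
      (f' : (W ⊞ Projective.over Cc : C) ⟶ B) (w' : j' ≫ f' = 0)
      (a : A₁ ⟶ A₁') (b : A₁' ⟶ kernel (Projective.π Cc)) (wab : a ≫ b = 0),
      (ShortComplex.mk j' f' w').ShortExact ∧ (ShortComplex.mk a b wab).ShortExact := by
  haveI := hS.epi_g
  haveI := hS.mono_f
  haveI := hT.epi_g
  haveI := hT.mono_f
  set P : C := Projective.over Cc with hP
  set q : P ⟶ Cc := Projective.π Cc with hq
  set l : P ⟶ B := Projective.factorThru q p with hldef
  have hl : l ≫ p = q := Projective.factorThru_comp q p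
  set φ : (W ⊞ P : C) ⟶ B := biprod.desc (f ≫ i) l with hφ
  have hφtot : φ = biprod.fst ≫ f ≫ i + biprod.snd ≫ l := by
    apply biprod.hom_ext' <;> simp [hφ]
  haveI hφepi : Epi φ := by
    rw [Preadditive.epi_iff_cancel_zero]
    intro R t ht
    have h1 : i ≫ t = 0 := by
      have : f ≫ i ≫ t = 0 := by
        have := biprod.inl ≫= ht
        simpa [hφ] using this
      exact (cancel_epi f).1 (by simpa using this)
    obtain ⟨u, hu⟩ := CokernelCofork.IsColimit.desc' hS.gIsCokernel t h1
    have h2 : l ≫ t = 0 := by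
      have := biprod.inr ≫= ht
      simpa [hφ] using this
    have h3 : q ≫ u = 0 := by
      rw [← hl, Category.assoc]
      rw [show p ≫ u = t from hu, h2]
    have hu0 : u = 0 := (cancel_epi q).1 (by simpa using h3)
    rw [← show p ≫ u = t from hu, hu0, comp_zero]
  have hses1 := shortExact_of_epi φ
  -- the map α : A₁ ⟶ ker φ
  have hαw : (j ≫ biprod.inl) ≫ φ = 0 := by
    rw [Category.assoc, hφ, biprod.inl_desc, ← Category.assoc, wjf, zero_comp]
  set α : A₁ ⟶ kernel φ := kernel.lift φ (j ≫ biprod.inl) hαw with hα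
  have hαι : α ≫ kernel.ι φ = j ≫ biprod.inl := kernel.lift_ι _ _ _
  -- the map β : ker φ ⟶ ker q
  have h4 : kernel.ι φ ≫ biprod.fst ≫ f ≫ i + kernel.ι φ ≫ biprod.snd ≫ l = 0 := by
    rw [← Preadditive.comp_add, ← hφtot, kernel.condition]
  have h5 : kernel.ι φ ≫ biprod.snd ≫ l = -(kernel.ι φ ≫ biprod.fst ≫ f ≫ i) := by
    rw [add_comm] at h4
    exact eq_neg_of_add_eq_zero_left h4
  have hβw : (kernel.ι φ ≫ biprod.snd) ≫ q = 0 := by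
    have h6 := h5 =≫ p
    simp only [Category.assoc, Preadditive.neg_comp, wip, comp_zero, neg_zero] at h6
    rw [Category.assoc, ← hl]
    simpa only [Category.assoc] using h6
  set β : kernel φ ⟶ kernel q := kernel.lift q (kernel.ι φ ≫ biprod.snd) hβw with hβ
  have hβι : β ≫ kernel.ι q = kernel.ι φ ≫ biprod.snd := kernel.lift_ι _ _ _
  have wab : α ≫ β = 0 := by
    rw [← cancel_mono (kernel.ι q), Category.assoc, hβι, ← Category.assoc, hαι, zero_comp]
    simp
  refine ⟨kernel φ, kernel.ι φ, φ, kernel.condition φ, α, β, wab, hses1, ?_⟩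
  -- short exactness of 0 → A₁ → ker φ → ker q → 0
  haveI hmonoα : Mono α := by
    have : Mono (α ≫ kernel.ι φ) := by rw [hαι]; exact mono_comp _ _
    exact mono_of_mono α (kernel.ι φ)
  haveI hepiβ : Epi β := by
    apply epi_of_pseudo_surjective
    intro x
    obtain ⟨y, hy⟩ : ∃ y, pseudoApply (kernel.ι q) x = y := ⟨_, rfl⟩
    have hx : pseudoApply q y = 0 := by
      rw [← hy, ← Pseudoelement.comp_apply, kernel.condition]
      exact zero_apply _ _
    have hpx : pseudoApply p (pseudoApply l y) = 0 := by
      rw [← Pseudoelement.comp_apply, hl]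
      exact hx
    obtain ⟨a, ha0⟩ := pseudo_exact_of_exact hS.exact _ hpx
    have ha : pseudoApply i a = pseudoApply l y := ha0
    obtain ⟨w, hw⟩ := pseudo_surjective_of_epi f a
    have e1 : pseudoApply φ (pseudoApply (biprod.inr : P ⟶ (W ⊞ P : C)) y)
        = pseudoApply l y := by
      rw [← Pseudoelement.comp_apply, hφ, biprod.inr_desc]
    have e2 : pseudoApply φ (pseudoApply (biprod.inl : W ⟶ (W ⊞ P : C)) w)
        = pseudoApply l y := by
      rw [← Pseudoelement.comp_apply, hφ, biprod.inl_desc, Pseudoelement.comp_apply, hw, ha]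
    have hφuv : pseudoApply φ (pseudoApply (biprod.inr : P ⟶ (W ⊞ P : C)) y) =
        pseudoApply φ (pseudoApply (biprod.inl : W ⟶ (W ⊞ P : C)) w) := e1.trans e2.symm
    obtain ⟨z, hz0, hzprop⟩ := sub_of_eq_image φ _ _ hφuv
    obtain ⟨y', hy'0⟩ := pseudo_exact_of_exact hses1.exact z hz0
    have hy' : pseudoApply (kernel.ι φ) y' = z := hy'0
    refine ⟨y', ?_⟩
    apply pseudo_injective_of_mono (kernel.ι q)
    rw [← Pseudoelement.comp_apply, hβι, Pseudoelement.comp_apply, hy']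
    have hsndinl : pseudoApply (biprod.snd : (W ⊞ P : C) ⟶ P)
        (pseudoApply (biprod.inl : W ⟶ (W ⊞ P : C)) w) = 0 := by
      rw [← Pseudoelement.comp_apply, biprod.inl_snd]
      exact zero_apply _ _
    have h7 := hzprop _ (biprod.snd : (W ⊞ P : C) ⟶ P) hsndinl
    rw [h7, ← Pseudoelement.comp_apply, biprod.inr_snd, pseudo_id_apply, hy]
  refine ShortComplex.ShortExact.mk' ?_ hmonoα hepiβ
  apply Pseudoelement.exact_of_pseudo_exact _
  intro y' hy'0
  have hy' : pseudoApply β y' = 0 := hy'0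
  have hz : pseudoApply (biprod.snd : (W ⊞ P : C) ⟶ P) (pseudoApply (kernel.ι φ) y') = 0 := by
    rw [← Pseudoelement.comp_apply, ← hβι, Pseudoelement.comp_apply, hy']
    exact apply_zero _
  set z := pseudoApply (kernel.ι φ) y' with hzdef
  have hzz := pseudo_biprod_eq z hz
  have hφz : pseudoApply φ z = 0 := by
    rw [hzdef, ← Pseudoelement.comp_apply, kernel.condition]
    exact zero_apply _ _
  have h7 : pseudoApply i (pseudoApply f
      (pseudoApply (biprod.fst : (W ⊞ P : C) ⟶ W) z)) = 0 := by
    rw [← Pseudoelement.comp_apply]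
    have h8 : (f ≫ i : W ⟶ B) = biprod.inl ≫ φ := by rw [hφ, biprod.inl_desc]
    rw [h8, Pseudoelement.comp_apply, hzz, hφz]
  have h9 : pseudoApply f (pseudoApply (biprod.fst : (W ⊞ P : C) ⟶ W) z) = 0 := by
    apply pseudo_injective_of_mono i
    rw [h7, apply_zero]
  obtain ⟨a₁, ha₁0⟩ := pseudo_exact_of_exact hT.exact _ h9
  have ha₁ : pseudoApply j a₁ = pseudoApply (biprod.fst : (W ⊞ P : C) ⟶ W) z := ha₁0
  refine ⟨a₁, ?_⟩
  show pseudoApply α a₁ = y'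
  apply pseudo_injective_of_mono (kernel.ι φ)
  rw [← Pseudoelement.comp_apply, hαι, Pseudoelement.comp_apply, ha₁, hzz, ← hzdef]

lemma biprod_shortExact (Aa Bb : C) :
    (ShortComplex.mk (biprod.inl : Aa ⟶ Aa ⊞ Bb) biprod.snd biprod.inl_snd).ShortExact :=
  ShortComplex.ShortExact.mk'
    (ShortComplex.exact_of_f_is_kernel _ (biprod.isKernelSndKernelFork Aa Bb))
    inferInstance inferInstance

lemma mem_of_iso (hX : IsResolving X) {M N : C} (e : M ≅ N) (hM : M ∈ X) : N ∈ X := by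
  have h0 : (0 : C) ∈ X := hX.projective_mem 0 inferInstance
  refine hX.ker_epi_closed (ShortComplex.mk e.inv (0 : M ⟶ (0 : C)) comp_zero) ?_ hM h0
  refine ShortComplex.ShortExact.mk' ?_ inferInstance ?_
  · rw [ShortComplex.exact_iff_epi _ rfl]
    exact inferInstance
  · exact ⟨fun u v _ => (isZero_zero C).eq_of_src u v⟩

lemma biprod_mem (hX : IsResolving X) {Aa Bb : C} (hA : Aa ∈ X) (hB : Bb ∈ X) :
    (Aa ⊞ Bb : C) ∈ X :=
  hX.ext_closed _ (biprod_shortExact Aa Bb) hA hB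

/-- the short exact sequence `0 → ker g₂ → X₀ ×_M Y₀ → X₀ → 0` -/
lemma pullback_shortExact {L Y M X₀ : C} (f₂ : L ⟶ Y) (g₂ : Y ⟶ M) (w : f₂ ≫ g₂ = 0)
    (hse : (ShortComplex.mk f₂ g₂ w).ShortExact) (g₁ : X₀ ⟶ M) :
    (ShortComplex.mk (pullback.lift (0 : L ⟶ X₀) f₂ (by rw [zero_comp, w]))
      (pullback.fst g₁ g₂) (pullback.lift_fst _ _ _)).ShortExact := by
  haveI := hse.epi_g
  haveI := hse.mono_f
  set e₂ : L ⟶ pullback g₁ g₂ := pullback.lift (0 : L ⟶ X₀) f₂ (by rw [zero_comp, w]) with he₂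
  haveI : Mono e₂ := by
    have : Mono (e₂ ≫ pullback.snd g₁ g₂) := by
      rw [he₂, pullback.lift_snd]; infer_instance
    exact mono_of_mono e₂ (pullback.snd g₁ g₂)
  refine ShortComplex.ShortExact.mk' ?_ inferInstance inferInstance
  apply ShortComplex.exact_of_f_is_kernel
  refine KernelFork.IsLimit.ofι' _ _ (fun {T} t ht => ?_)
  have h2 : (t ≫ pullback.snd g₁ g₂) ≫ g₂ = 0 := by
    rw [Category.assoc, ← pullback.condition, ← Category.assoc, ht, zero_comp]
  obtain ⟨u, hu⟩ := KernelFork.IsLimit.lift' hse.fIsKernel _ h2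
  refine ⟨u, ?_⟩
  apply pullback.hom_ext
  · simp [e₂, ht]
    erw [pullback.lift_fst, comp_zero]
  · simp [e₂]
    erw [pullback.lift_snd]
    simpa using hu

lemma isSyzygy_of_iso {n : ℕ} {M M' K : C} (h : IsSyzygy X n M K) (e : M ≅ M') :
    IsSyzygy X n M' K := by
  cases h with
  | zero e' => exact IsSyzygy.zero (e'.trans e)
  | succ f g w hse hX₀ h =>
    refine IsSyzygy.succ f (g ≫ e.hom) (by rw [← Category.assoc, w, zero_comp]) ?_ hX₀ h
    refine ShortComplex.shortExact_of_iso (S₁ := ShortComplex.mk f g w) ?_ hse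
    exact ShortComplex.isoMk (Iso.refl _) (Iso.refl _) e (by simp) (by simp)

lemma lemH (hX : IsResolving X) [EnoughProjectives C] :
    ∀ (n : ℕ) {Aa B Cc K : C} (i : Aa ⟶ B) (p : B ⟶ Cc) (w : i ≫ p = 0),
      (ShortComplex.mk i p w).ShortExact → Cc ∈ X → IsSyzygy X n Aa K →
      ∃ K', IsSyzygy X n B K' ∧ (K' ∈ X ↔ K ∈ X)
  | 0, Aa, B, Cc, K, i, p, w, hse, hC, hsyz => by
    cases hsyz with
    | zero e =>
      refine ⟨B, IsSyzygy.zero (Iso.refl B), ?_, ?_⟩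
      · intro hB
        exact mem_of_iso hX e.symm (hX.ker_epi_closed _ hse hB hC)
      · intro hK
        exact hX.ext_closed _ hse (mem_of_iso hX e hK) hC
  | (n+1), Aa, B, Cc, K, i, p, w, hse, hC, hsyz => by
    cases hsyz with
    | succ j fW wjf hseT hW hsyz₁ =>
      obtain ⟨A₁', j', f', w', a, b, wab, hse1, hse2⟩ := horseshoe_step hse hseT
      have hΩ : kernel (Projective.π Cc) ∈ X :=
        hX.ker_epi_closed _ (shortExact_of_epi (Projective.π Cc))
          (hX.projective_mem _ inferInstance) hC
      obtain ⟨K', hK', hiff⟩ := lemH hX n a b wab hse2 hΩ hsyz₁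
      refine ⟨K', IsSyzygy.succ j' f' w' hse1 ?_ hK', hiff⟩
      exact biprod_mem hX hW (hX.projective_mem _ inferInstance)

end SchanuelAux
end SchanuelAux

/-- Generalized Schanuel lemma for resolving subcategories: given two exact sequences
`0 → X_n → X_{n-1} → ⋯ → X_0 → M → 0` and `0 → Y_n → Y_{n-1} → ⋯ → Y_0 → M → 0` with
all middle terms in the resolving subcategory `X`, we have `X_n ∈ X ↔ Y_n ∈ X`. -/
theorem syzygy_mem_iff
    (A : Type u₁) [Category.{v₁} A] [Abelian A] [EnoughProjectives A]
    (X : Set A) (hX : IsResolving X) (n : ℕ) (M K₁ K₂ : A)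
    (h₁ : IsSyzygy X n M K₁) (h₂ : IsSyzygy X n M K₂) :
    K₁ ∈ X ↔ K₂ ∈ X := by
  induction n generalizing M K₁ K₂ with
  | zero =>
    cases h₁ with | zero e₁ => ?_
    cases h₂ with | zero e₂ => ?_
    constructor
    · intro h; exact SchanuelAux.mem_of_iso hX (e₁.trans e₂.symm) h
    · intro h; exact SchanuelAux.mem_of_iso hX (e₂.trans e₁.symm) h
  | succ n ih =>
    cases h₁ with | succ f₁ g₁ w₁ hse₁ hX₀ hs₁ => ?_
    cases h₂ with | succ f₂ g₂ w₂ hse₂ hY₀ hs₂ => ?_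
    have sesA := SchanuelAux.pullback_shortExact f₂ g₂ w₂ hse₂ g₁
    have sesB := SchanuelAux.pullback_shortExact f₁ g₁ w₁ hse₁ g₂
    obtain ⟨K₂', hK₂', hiff₂⟩ := SchanuelAux.lemH hX n _ _ _ sesA hX₀ hs₂
    obtain ⟨K₁', hK₁', hiff₁⟩ := SchanuelAux.lemH hX n _ _ _ sesB hY₀ hs₁
    have hK₁'' : IsSyzygy X n (pullback g₁ g₂) K₁' :=
      SchanuelAux.isSyzygy_of_iso hK₁' (pullbackSymmetry g₂ g₁)
    exact hiff₁.symm.trans ((ih _ _ _ hK₁'' hK₂').trans hiff₂)
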